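/- Let Σ be a finite nonempty alphabet and let L ∈ LMO(Σ) be a language recognized by some MOn-1qfa over Σ with isolated cut-point. Then the syntactic monoid M(L) is a finite monoid which is R-trivial and a block-group. -/

import Mathlib

open Matrix

/-- A Measure-Only one-way quantum finite automaton (MOn-1qfa) over the alphabet `σ`
(the letter `none` plays the role of the end-marker `#`).  The data consists of:
the number of states `m`, for each letter `c` (and the end-marker) the number `k c`
of distinct eigenvalues of the observable `O_c`, the eigenvalues `eig c` themselves,
the corresponding orthogonal projectors `P c`, the initial (row) vector `init`,
and the set `F` of (indices of) accepting eigenvalues of the end-marker observable. -/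
structure MOnQFA (σ : Type) where
  m : ℕ
  k : Option σ → ℕ
  eig : (c : Option σ) → Fin (k c) → ℝ
  P : (c : Option σ) → Fin (k c) → Matrix (Fin m) (Fin m) ℂ
  init : Matrix (Fin 1) (Fin m) ℂ
  F : Finset (Fin (k none))

namespace MOnQFA

variable {σ : Type}

/-- Well-formedness of a MOn-1qfa: the eigenvalues of each observable are distinct,
the `P c j` are pairwise orthogonal Hermitian idempotents (orthogonal projectors)
summing to the identity (so that `O_c = ∑ j, eig c j • P c j` is a Hermitian matrix
with spectral decomposition given by the data), and the initial vector has norm 1. -/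
def Valid (A : MOnQFA σ) : Prop :=
  (∀ c, Function.Injective (A.eig c)) ∧
  (∀ c j, (A.P c j)ᴴ = A.P c j) ∧
  (∀ c j, A.P c j * A.P c j = A.P c j) ∧
  (∀ c j j', j ≠ j' → A.P c j * A.P c j' = 0) ∧
  (∀ c, ∑ j, A.P c j = 1) ∧
  (∑ i, Complex.normSq (A.init 0 i) = 1)

/-- The density matrix `σ(w)` reached after reading the word `w`:
`σ(ε) = π₀† π₀` and `σ(yc) = ∑ j, P_j(c) σ(y) P_j(c)`. -/
noncomputable def dens (A : MOnQFA σ) (w : List σ) : Matrix (Fin A.m) (Fin A.m) ℂ :=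
  w.foldl (fun ρ c => ∑ j, A.P (some c) j * ρ * A.P (some c) j) (A.initᴴ * A.init)

/-- The acceptance probability `p_A(w) = Tr (∑_{j ∈ F} P_j(#) σ(w) P_j(#))`. -/
noncomputable def prob (A : MOnQFA σ) (w : List σ) : ℝ :=
  (Matrix.trace (∑ j ∈ A.F, A.P none j * A.dens w * A.P none j)).re

end MOnQFA

/-- `LMO σ` : the class of languages recognized by some MOn-1qfa over `σ`
with an isolated cut-point. -/
def LMO (σ : Type) : Set (Set (List σ)) :=
  {L | ∃ A : MOnQFA σ, A.Valid ∧ ∃ lam δ : ℝ, 0 < lam ∧ 0 < δ ∧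
        (∀ w, |A.prob w - lam| ≥ δ) ∧ L = {w | A.prob w > lam}}

/-- `PMO σ` : the class of probabilistic events induced by MOn-1qfas over `σ`. -/
def PMO (σ : Type) : Set (List σ → ℝ) :=
  {φ | ∃ A : MOnQFA σ, A.Valid ∧ φ = A.prob}
/-- The syntactic congruence of a language `L` on the free monoid:
`x ∼_L y` iff for all contexts `a, b`, `a x b ∈ L ↔ a y b ∈ L`. -/
def synCon {σ : Type} (L : Set (FreeMonoid σ)) : Con (FreeMonoid σ) where
  r x y := ∀ a b : FreeMonoid σ, a * x * b ∈ L ↔ a * y * b ∈ L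
  iseqv :=
    ⟨fun _ _ _ => Iff.rfl, fun h a b => (h a b).symm, fun h₁ h₂ a b => (h₁ a b).trans (h₂ a b)⟩
  mul' := by
    intro w x y z hw hy a b
    have h1 : a * (w * y) * b ∈ L ↔ a * (x * y) * b ∈ L := by
      have := hw a (y * b); simpa [mul_assoc] using this
    have h2 : a * (x * y) * b ∈ L ↔ a * (x * z) * b ∈ L := by
      have := hy (a * x) b; simpa [mul_assoc] using this
    exact h1.trans h2

/-- The syntactic monoid `M(L) = Σ*/∼_L` of a language `L`. -/
def SynMonoid {σ : Type} (L : Set (FreeMonoid σ)) : Type := (synCon L).Quotient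

noncomputable instance {σ : Type} (L : Set (FreeMonoid σ)) : Monoid (SynMonoid L) :=
  inferInstanceAs (Monoid (synCon L).Quotient)

noncomputable instance {σ : Type} (L : Set (List σ)) : Monoid (SynMonoid (σ := σ) L) :=
  inferInstanceAs (Monoid (synCon (σ := σ) L).Quotient)

/-- A monoid is `J`-trivial if `M a M = M b M` implies `a = b`. -/
def IsJTrivial (M : Type*) [Monoid M] : Prop :=
  ∀ a b : M,
    (Set.range fun p : M × M => p.1 * a * p.2) = (Set.range fun p : M × M => p.1 * b * p.2) →
      a = b

/-- A monoid is `R`-trivial if `a M = b M` implies `a = b`. -/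
def IsRTrivial (M : Type*) [Monoid M] : Prop :=
  ∀ a b : M, (Set.range fun x => a * x) = (Set.range fun x => b * x) → a = b

/-- A monoid is a block-group if every `R`-class and every `L`-class contains at most
one idempotent. -/
def IsBlockGroup (M : Type*) [Monoid M] : Prop :=
  ∀ e f : M, IsIdempotentElem e → IsIdempotentElem f →
    (((Set.range fun x => e * x) = Set.range fun x => f * x) ∨
      ((Set.range fun x => x * e) = Set.range fun x => x * f)) → e = f


/-! ### Auxiliary development -/

open Matrix Filter

noncomputable section AuxQFA

/-- Linear equivalence between square matrices and Euclidean space, sending a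
matrix to its family of entries. -/
def matEquiv (m : ℕ) : Matrix (Fin m) (Fin m) ℂ ≃ₗ[ℂ] EuclideanSpace ℂ (Fin m × Fin m) where
  toFun X := WithLp.toLp 2 (fun p : Fin m × Fin m => X p.1 p.2)
  invFun v := fun i j => v (i, j)
  map_add' _ _ := rfl
  map_smul' _ _ := rfl
  left_inv _ := rfl
  right_inv _ := rfl

lemma matEquiv_inner (m : ℕ) (X Y : Matrix (Fin m) (Fin m) ℂ) :
    (inner ℂ (matEquiv m X) (matEquiv m Y) : ℂ) = Matrix.trace (Xᴴ * Y) := by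
  rw [PiLp.inner_apply]
  simp only [RCLike.inner_apply]
  rw [Matrix.trace, Fintype.sum_prod_type_right]
  refine Finset.sum_congr rfl fun j _ => ?_
  simp [Matrix.diag, Matrix.mul_apply, Matrix.conjTranspose_apply, matEquiv, mul_comm]
  rfl

namespace MOnQFA
variable {σ : Type} (A : MOnQFA σ)

/-- The superoperator `ρ ↦ ∑ j, P_j(c) ρ P_j(c)` as a plain function on matrices. -/
def phiM (c : Option σ) (X : Matrix (Fin A.m) (Fin A.m) ℂ) : Matrix (Fin A.m) (Fin A.m) ℂ :=
  ∑ j, A.P c j * X * A.P c j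

/-- `phiM` as a linear map. -/
def phiL (c : Option σ) : Matrix (Fin A.m) (Fin A.m) ℂ →ₗ[ℂ] Matrix (Fin A.m) (Fin A.m) ℂ where
  toFun := A.phiM c
  map_add' X Y := by simp [phiM, mul_add, add_mul, Finset.sum_add_distrib]
  map_smul' t X := by simp [phiM, Finset.smul_sum, mul_smul_comm, Matrix.smul_mul]

lemma phiM_idem (hv : A.Valid) (c : Option σ) (X : Matrix (Fin A.m) (Fin A.m) ℂ) :
    A.phiM c (A.phiM c X) = A.phiM c X := by
  obtain ⟨-, -, hidem, horth, -, -⟩ := hv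
  unfold phiM
  refine Finset.sum_congr rfl fun j _ => ?_
  have h1 : ∀ k ∈ Finset.univ, k ≠ j →
      A.P c j * (A.P c k * X * A.P c k) * A.P c j = (0 : Matrix (Fin A.m) (Fin A.m) ℂ) := by
    intro k _ hk
    rw [show A.P c j * (A.P c k * X * A.P c k) * A.P c j
        = (A.P c j * A.P c k) * X * (A.P c k * A.P c j) by noncomm_ring,
      horth c j k (Ne.symm hk), horth c k j hk]
    simp
  rw [Finset.mul_sum, Finset.sum_mul, Finset.sum_eq_single_of_mem j (Finset.mem_univ j) h1,
    show A.P c j * (A.P c j * X * A.P c j) * A.P c j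
      = (A.P c j * A.P c j) * X * (A.P c j * A.P c j) by noncomm_ring, hidem c j]

lemma phiM_selfadj (hv : A.Valid) (c : Option σ) (X Y : Matrix (Fin A.m) (Fin A.m) ℂ) :
    Matrix.trace ((A.phiM c X)ᴴ * Y) = Matrix.trace (Xᴴ * A.phiM c Y) := by
  obtain ⟨-, hherm, -, -, -, -⟩ := hv
  unfold phiM
  rw [Matrix.conjTranspose_sum, Finset.sum_mul, Finset.mul_sum, Matrix.trace_sum,
    Matrix.trace_sum]
  refine Finset.sum_congr rfl fun j _ => ?_
  simp only [Matrix.conjTranspose_mul, hherm c j]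
  rw [Matrix.trace_mul_cycle (A := A.P c j) (B := Xᴴ * A.P c j) (C := Y),
    Matrix.trace_mul_cycle]
  noncomm_ring

end MOnQFA

end AuxQFA

noncomputable section InnerTools2

section InnerTools
variable {H : Type*} [NormedAddCommGroup H] [InnerProductSpace ℂ H]

lemma norm_sq_decomp (T : H →L[ℂ] H) (hidem : ∀ u, T (T u) = T u)
    (hsa : ∀ u v, (inner ℂ (T u) v : ℂ) = inner ℂ u (T v)) (u : H) :
    ‖T u‖ ^ 2 + ‖u - T u‖ ^ 2 = ‖u‖ ^ 2 := by
  have horth : (inner ℂ (T u) (u - T u) : ℂ) = 0 := by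
    rw [hsa, map_sub, hidem, sub_self, inner_zero_right]
  have h := norm_add_sq (𝕜 := ℂ) (T u) (u - T u)
  rw [add_sub_cancel, horth] at h
  simp at h
  linarith

lemma norm_le_of_idem_selfadj (T : H →L[ℂ] H) (hidem : ∀ u, T (T u) = T u)
    (hsa : ∀ u v, (inner ℂ (T u) v : ℂ) = inner ℂ u (T v)) (u : H) :
    ‖T u‖ ≤ ‖u‖ := by
  have h := norm_sq_decomp T hidem hsa u
  nlinarith [norm_nonneg (T u), norm_nonneg u, sq_nonneg ‖u - T u‖, norm_nonneg (u - T u)]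

lemma fix_of_norm_eq (T : H →L[ℂ] H) (hidem : ∀ u, T (T u) = T u)
    (hsa : ∀ u v, (inner ℂ (T u) v : ℂ) = inner ℂ u (T v)) (u : H)
    (h : ‖T u‖ = ‖u‖) : T u = u := by
  have h2 := norm_sq_decomp T hidem hsa u
  rw [h] at h2
  have : ‖u - T u‖ = 0 := by nlinarith [norm_nonneg (u - T u)]
  rw [norm_eq_zero, sub_eq_zero] at this
  exact this.symm

end InnerTools

namespace MOnQFA
variable {σ : Type} (A : MOnQFA σ)

/-- The superoperator of letter `c` transported to Euclidean space, as a
continuous linear map. -/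
def psi (c : Option σ) : EuclideanSpace ℂ (Fin A.m × Fin A.m) →L[ℂ] EuclideanSpace ℂ (Fin A.m × Fin A.m) :=
  LinearMap.toContinuousLinearMap
    ((matEquiv A.m).toLinearMap.comp ((A.phiL c).comp (matEquiv A.m).symm.toLinearMap))

lemma psi_apply (c : Option σ) (X : Matrix (Fin A.m) (Fin A.m) ℂ) :
    A.psi c (matEquiv A.m X) = matEquiv A.m (A.phiM c X) := by
  simp [psi, phiL, LinearMap.coe_toContinuousLinearMap']
  rfl

lemma psi_idem (hv : A.Valid) (c : Option σ) (u : EuclideanSpace ℂ (Fin A.m × Fin A.m)) :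
    A.psi c (A.psi c u) = A.psi c u := by
  have : u = matEquiv A.m ((matEquiv A.m).symm u) := ((matEquiv A.m).apply_symm_apply u).symm
  rw [this, psi_apply, psi_apply]
  exact congrArg _ (A.phiM_idem hv c _)

lemma psi_selfadj (hv : A.Valid) (c : Option σ) (u v : EuclideanSpace ℂ (Fin A.m × Fin A.m)) :
    (inner ℂ (A.psi c u) v : ℂ) = inner ℂ u (A.psi c v) := by
  have hu : u = matEquiv A.m ((matEquiv A.m).symm u) := ((matEquiv A.m).apply_symm_apply u).symm
  have hvv : v = matEquiv A.m ((matEquiv A.m).symm v) := ((matEquiv A.m).apply_symm_apply v).symm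
  rw [hu, hvv, psi_apply, psi_apply, matEquiv_inner, matEquiv_inner]
  exact phiM_selfadj A hv c _ _

lemma psi_norm_le (hv : A.Valid) (c : Option σ) (u : EuclideanSpace ℂ (Fin A.m × Fin A.m)) :
    ‖A.psi c u‖ ≤ ‖u‖ :=
  norm_le_of_idem_selfadj _ (A.psi_idem hv c) (A.psi_selfadj hv c) u

lemma psi_fix (hv : A.Valid) (c : Option σ) (u : EuclideanSpace ℂ (Fin A.m × Fin A.m))
    (h : ‖A.psi c u‖ = ‖u‖) : A.psi c u = u :=
  fix_of_norm_eq _ (A.psi_idem hv c) (A.psi_selfadj hv c) u h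

/-- The operator of a word (letters applied left to right). -/
def opW (w : List σ) : EuclideanSpace ℂ (Fin A.m × Fin A.m) →L[ℂ] EuclideanSpace ℂ (Fin A.m × Fin A.m) :=
  w.foldr (fun c f => f.comp (A.psi (some c))) 1

lemma opW_nil : A.opW [] = 1 := rfl

lemma opW_cons (c : σ) (t : List σ) : A.opW (c :: t) = (A.opW t).comp (A.psi (some c)) := rfl

lemma opW_append (u v : List σ) : A.opW (u ++ v) = (A.opW v).comp (A.opW u) := by
  induction u with
  | nil =>
      rw [List.nil_append, opW_nil, ContinuousLinearMap.one_def, ContinuousLinearMap.comp_id]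
  | cons c t ih => rw [List.cons_append, opW_cons, opW_cons, ih, ContinuousLinearMap.comp_assoc]

lemma opW_norm_le (hv : A.Valid) (w : List σ) (z : EuclideanSpace ℂ (Fin A.m × Fin A.m)) :
    ‖A.opW w z‖ ≤ ‖z‖ := by
  induction w generalizing z with
  | nil => simp [opW_nil]
  | cons c t ih =>
      rw [opW_cons]
      exact le_trans (ih _) (A.psi_norm_le hv _ z)

lemma opW_fix (hv : A.Valid) (w : List σ) (z : EuclideanSpace ℂ (Fin A.m × Fin A.m))
    (h : ‖A.opW w z‖ = ‖z‖) : A.opW w z = z := by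
  induction w generalizing z with
  | nil => simp [opW_nil]
  | cons c t ih =>
      rw [opW_cons] at h ⊢
      have h1 : ‖A.psi (some c) z‖ = ‖z‖ := by
        have := A.opW_norm_le hv t (A.psi (some c) z)
        have := A.psi_norm_le hv (some c) z
        simp only [ContinuousLinearMap.comp_apply] at h
        linarith [le_of_eq h, le_of_eq h.symm]
      have h2 : A.psi (some c) z = z := A.psi_fix hv (some c) z h1
      simp only [ContinuousLinearMap.comp_apply, h2] at h ⊢
      exact ih z h

lemma opW_opNorm_le (hv : A.Valid) (w : List σ) : ‖A.opW w‖ ≤ 1 :=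
  (A.opW w).opNorm_le_bound zero_le_one (fun z => by simpa using A.opW_norm_le hv w z)

/-- The image of the initial density matrix in Euclidean space. -/
def vinit : EuclideanSpace ℂ (Fin A.m × Fin A.m) := matEquiv A.m (A.initᴴ * A.init)

lemma dens_opW (w : List σ) : matEquiv A.m (A.dens w) = A.opW w A.vinit := by
  rw [dens, vinit]
  generalize A.initᴴ * A.init = ρ
  induction w generalizing ρ with
  | nil => simp [opW_nil]
  | cons c t ih =>
      rw [List.foldl_cons, opW_cons, ContinuousLinearMap.comp_apply, psi_apply]
      exact ih _

/-- The acceptance functional, as a linear map on matrices. -/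
def accL : Matrix (Fin A.m) (Fin A.m) ℂ →ₗ[ℂ] ℂ where
  toFun X := Matrix.trace (∑ j ∈ A.F, A.P none j * X * A.P none j)
  map_add' X Y := by simp [mul_add, add_mul, Finset.sum_add_distrib]
  map_smul' t X := by
    simp [Finset.smul_sum, mul_smul_comm, Matrix.smul_mul, Matrix.trace_smul, Finset.mul_sum]

/-- The acceptance functional on Euclidean space. -/
def fV : EuclideanSpace ℂ (Fin A.m × Fin A.m) →L[ℂ] ℂ :=
  LinearMap.toContinuousLinearMap (A.accL.comp (matEquiv A.m).symm.toLinearMap)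

lemma prob_eq (w : List σ) : A.prob w = (A.fV (A.opW w A.vinit)).re := by
  rw [prob, ← A.dens_opW, fV]
  simp [LinearMap.coe_toContinuousLinearMap', accL]

end MOnQFA

end InnerTools2

noncomputable section InnerTools3

variable {H : Type*} [NormedAddCommGroup H] [InnerProductSpace ℂ H]

lemma inner_zero_of_fix_of_ker (S : H →L[ℂ] H) (hc : ∀ u, ‖S u‖ ≤ ‖u‖)
    {u v : H} (hu : S u = u) (hv : S v = 0) : (inner ℂ u v : ℂ) = 0 := by
  by_contra hα
  set α : ℂ := inner ℂ u v with hαdef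
  have hvne : v ≠ 0 := by
    rintro rfl; exact hα (by simp [hαdef])
  set s : ℝ := 1 / (‖v‖ ^ 2 + 1) with hs
  have hvpos : (0:ℝ) < ‖v‖ ^ 2 + 1 := by positivity
  have hspos : 0 < s := by positivity
  have hsv : s * ‖v‖ ^ 2 < 1 := by
    rw [hs, div_mul_eq_mul_div, one_mul, div_lt_one hvpos]; linarith
  set t : ℂ := -(s : ℂ) * (starRingEnd ℂ) α with ht
  have hSle : ‖u‖ ≤ ‖u + t • v‖ := by
    have h1 : S (u + t • v) = u := by
      rw [map_add, S.map_smul, hu, hv, smul_zero, add_zero]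
    have := hc (u + t • v)
    rwa [h1] at this
  have hinner : (inner ℂ u (t • v) : ℂ) = ((-(s * Complex.normSq α) : ℝ) : ℂ) := by
    rw [inner_smul_right, ← hαdef, mul_assoc, ← Complex.normSq_eq_conj_mul_self]
    push_cast; ring
  have htsq : ‖t‖ ^ 2 = s ^ 2 * Complex.normSq α := by
    have h2 : ‖t‖ ^ 2 = Complex.normSq t := by
      rw [Complex.sq_norm]
    rw [h2, ht, Complex.normSq_mul, Complex.normSq_conj, Complex.normSq_neg,
      Complex.normSq_ofReal]
    ring
  have hnorm : ‖t • v‖ ^ 2 = s ^ 2 * Complex.normSq α * ‖v‖ ^ 2 := by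
    rw [norm_smul, mul_pow, htsq]
  have hexp : ‖u + t • v‖ ^ 2 = ‖u‖ ^ 2 + 2 * (-(s * Complex.normSq α))
      + s ^ 2 * Complex.normSq α * ‖v‖ ^ 2 := by
    rw [norm_add_sq (𝕜 := ℂ), hinner, hnorm]
    simp [RCLike.re_to_complex]
  have hnsq : 0 < Complex.normSq α := Complex.normSq_pos.mpr hα
  have hsq : ‖u‖ ^ 2 ≤ ‖u + t • v‖ ^ 2 := by
    have := pow_le_pow_left₀ (norm_nonneg u) hSle 2
    exact this
  rw [hexp] at hsq
  nlinarith [mul_pos hspos hnsq]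

lemma selfadj_of_idem_contr (S : H →L[ℂ] H) (hidem : ∀ u, S (S u) = S u)
    (hc : ∀ u, ‖S u‖ ≤ ‖u‖) (u v : H) : (inner ℂ (S u) v : ℂ) = inner ℂ u (S v) := by
  have hker : ∀ w, S (w - S w) = 0 := by intro w; rw [map_sub, hidem, sub_self]
  have h1 : (inner ℂ (S u) v : ℂ) = inner ℂ (S u) (S v) := by
    have hv3 : S v + (v - S v) = v := by abel
    calc (inner ℂ (S u) v : ℂ) = inner ℂ (S u) (S v + (v - S v)) := by rw [hv3]
      _ = inner ℂ (S u) (S v) + inner ℂ (S u) (v - S v) := inner_add_right _ _ _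
      _ = inner ℂ (S u) (S v) := by
          rw [inner_zero_of_fix_of_ker S hc (hidem u) (hker v), add_zero]
  have h2 : (inner ℂ u (S v) : ℂ) = inner ℂ (S u) (S v) := by
    have hu3 : S u + (u - S u) = u := by abel
    calc (inner ℂ u (S v) : ℂ) = inner ℂ (S u + (u - S u)) (S v) := by rw [hu3]
      _ = inner ℂ (S u) (S v) + inner ℂ (u - S u) (S v) := inner_add_left _ _ _
      _ = inner ℂ (S u) (S v) := by
          have h0 : (inner ℂ (S v) (u - S u) : ℂ) = 0 :=
            inner_zero_of_fix_of_ker S hc (hidem v) (hker u)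
          have h0' : (inner ℂ (u - S u) (S v) : ℂ) = 0 := by
            rw [← inner_conj_symm, h0, map_zero]
          rw [h0', add_zero]
  rw [h1, h2]

lemma idem_pair_eq (S1 S2 : H →L[ℂ] H)
    (h1 : ∀ u, S1 (S1 u) = S1 u) (h2 : ∀ u, S2 (S2 u) = S2 u)
    (hc1 : ∀ u, ‖S1 u‖ ≤ ‖u‖) (hc2 : ∀ u, ‖S2 u‖ ≤ ‖u‖)
    (h12 : ∀ u, S1 (S2 u) = S2 u) (h21 : ∀ u, S2 (S1 u) = S1 u) : S1 = S2 := by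
  have sa1 := selfadj_of_idem_contr S1 h1 hc1
  have sa2 := selfadj_of_idem_contr S2 h2 hc2
  ext z
  have key : (inner ℂ (S1 z - S2 z) (S1 z - S2 z) : ℂ) = 0 := by
    rw [inner_sub_left, inner_sub_right, inner_sub_right]
    have e11 : (inner ℂ (S1 z) (S1 z) : ℂ) = inner ℂ z (S1 z) := by rw [sa1, h1]
    have e12 : (inner ℂ (S1 z) (S2 z) : ℂ) = inner ℂ z (S2 z) := by rw [sa1, h12]
    have e21 : (inner ℂ (S2 z) (S1 z) : ℂ) = inner ℂ z (S1 z) := by rw [sa2, h21]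
    have e22 : (inner ℂ (S2 z) (S2 z) : ℂ) = inner ℂ z (S2 z) := by rw [sa2, h2]
    rw [e11, e12, e21, e22]; ring
  have : S1 z - S2 z = 0 := inner_self_eq_zero.mp key
  have := sub_eq_zero.mp this
  simpa using this

end InnerTools3

noncomputable section LimitTools

namespace MOnQFA
variable {σ : Type} (A : MOnQFA σ)

/-- `n`-fold repetition of a word. -/
def wpow (t : List σ) : ℕ → List σ
  | 0 => []
  | n + 1 => t ++ wpow t n

lemma opW_wpow (t : List σ) (n : ℕ) : A.opW (wpow t n) = A.opW t ^ n := by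
  induction n with
  | zero => rw [wpow, opW_nil, pow_zero]
  | succ n ih =>
      rw [wpow, opW_append, ih, pow_succ]
      rfl

lemma opW_pow_norm_le (hv : A.Valid) (t : List σ) (n : ℕ) : ‖A.opW t ^ n‖ ≤ 1 := by
  rw [← opW_wpow]; exact A.opW_opNorm_le hv _

lemma exists_limit (hv : A.Valid) (t : List σ) :
    ∃ (g : ℕ → ℕ) (S : EuclideanSpace ℂ (Fin A.m × Fin A.m) →L[ℂ] EuclideanSpace ℂ (Fin A.m × Fin A.m)),
      StrictMono g ∧ Filter.Tendsto (fun k => A.opW t ^ g k) Filter.atTop (nhds S) ∧ ‖S‖ ≤ 1 := by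
  haveI := FiniteDimensional.proper ℂ
    (EuclideanSpace ℂ (Fin A.m × Fin A.m) →L[ℂ] EuclideanSpace ℂ (Fin A.m × Fin A.m))
  have hcpt : IsCompact (Metric.closedBall
      (0 : EuclideanSpace ℂ (Fin A.m × Fin A.m) →L[ℂ] EuclideanSpace ℂ (Fin A.m × Fin A.m)) 1) :=
    isCompact_closedBall _ _
  have hmem : ∀ n : ℕ, A.opW t ^ n ∈ Metric.closedBall
      (0 : EuclideanSpace ℂ (Fin A.m × Fin A.m) →L[ℂ] EuclideanSpace ℂ (Fin A.m × Fin A.m)) 1 :=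
    fun n => by rw [Metric.mem_closedBall, dist_zero_right]; exact A.opW_pow_norm_le hv t n
  obtain ⟨S, hSmem, g, hg, hconv⟩ := hcpt.tendsto_subseq hmem
  exact ⟨g, S, hg, hconv, by rwa [Metric.mem_closedBall, dist_zero_right] at hSmem⟩

lemma exists_limit_pair (hv : A.Valid) (t₁ t₂ : List σ) :
    ∃ (g : ℕ → ℕ) (S₁ S₂ : EuclideanSpace ℂ (Fin A.m × Fin A.m) →L[ℂ] EuclideanSpace ℂ (Fin A.m × Fin A.m)),
      StrictMono g ∧ Filter.Tendsto (fun k => A.opW t₁ ^ g k) Filter.atTop (nhds S₁) ∧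
        Filter.Tendsto (fun k => A.opW t₂ ^ g k) Filter.atTop (nhds S₂) ∧ ‖S₁‖ ≤ 1 ∧ ‖S₂‖ ≤ 1 := by
  obtain ⟨g₁, S₁, hg₁, hconv₁, hS₁⟩ := A.exists_limit hv t₁
  -- take a further subsequence for t₂
  haveI := FiniteDimensional.proper ℂ
    (EuclideanSpace ℂ (Fin A.m × Fin A.m) →L[ℂ] EuclideanSpace ℂ (Fin A.m × Fin A.m))
  have hcpt : IsCompact (Metric.closedBall
      (0 : EuclideanSpace ℂ (Fin A.m × Fin A.m) →L[ℂ] EuclideanSpace ℂ (Fin A.m × Fin A.m)) 1) :=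
    isCompact_closedBall _ _
  have hmem : ∀ k : ℕ, A.opW t₂ ^ g₁ k ∈ Metric.closedBall
      (0 : EuclideanSpace ℂ (Fin A.m × Fin A.m) →L[ℂ] EuclideanSpace ℂ (Fin A.m × Fin A.m)) 1 :=
    fun k => by rw [Metric.mem_closedBall, dist_zero_right]; exact A.opW_pow_norm_le hv t₂ _
  obtain ⟨S₂, hSmem, g₂, hg₂, hconv₂⟩ := hcpt.tendsto_subseq hmem
  refine ⟨g₁ ∘ g₂, S₁, S₂, hg₁.comp hg₂, ?_, hconv₂, hS₁,
    by rwa [Metric.mem_closedBall, dist_zero_right] at hSmem⟩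
  exact hconv₁.comp (hg₂.tendsto_atTop)

set_option maxHeartbeats 1000000 in
lemma comp_limit_fix (hv : A.Valid) (p q : List σ) (g : ℕ → ℕ)
    (hg : Filter.Tendsto g Filter.atTop Filter.atTop)
    {S : EuclideanSpace ℂ (Fin A.m × Fin A.m) →L[ℂ] EuclideanSpace ℂ (Fin A.m × Fin A.m)}
    (hS : Filter.Tendsto (fun k => A.opW (p ++ q) ^ g k) Filter.atTop (nhds S)) :
    (A.opW p).comp S = S := by
  refine ContinuousLinearMap.ext fun z => ?_
  rw [ContinuousLinearMap.comp_apply]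
  set T := A.opW (p ++ q) with hT
  have ha : Antitone fun n => ‖(T ^ n) z‖ := antitone_nat_of_succ_le fun n => by
    rw [pow_succ', ContinuousLinearMap.mul_apply]
    exact A.opW_norm_le hv (p ++ q) _
  have hbdd : BddBelow (Set.range fun n => ‖(T ^ n) z‖) :=
    ⟨0, by rintro r ⟨n, rfl⟩; positivity⟩
  have hr : Filter.Tendsto (fun n => ‖(T ^ n) z‖) Filter.atTop
      (nhds (⨅ n, ‖(T ^ n) z‖)) := tendsto_atTop_ciInf ha hbdd
  set r := ⨅ n, ‖(T ^ n) z‖ with hrdef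
  have hptz : Filter.Tendsto (fun k => (T ^ g k) z) Filter.atTop (nhds (S z)) := by
    have hcont : Continuous fun
        (B : EuclideanSpace ℂ (Fin A.m × Fin A.m) →L[ℂ] EuclideanSpace ℂ (Fin A.m × Fin A.m)) =>
        B z := (ContinuousLinearMap.apply ℂ _ z).continuous
    exact (hcont.tendsto S).comp hS
  have hSz : ‖S z‖ = r :=
    tendsto_nhds_unique ((continuous_norm.tendsto _).comp hptz) (hr.comp hg)
  have hg1 : Filter.Tendsto (fun k => g k + 1) Filter.atTop Filter.atTop :=
    tendsto_atTop_mono (fun k => Nat.le_add_right (g k) 1) hg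
  have hsq : Filter.Tendsto (fun k => ‖A.opW p ((T ^ g k) z)‖) Filter.atTop (nhds r) := by
    refine tendsto_of_tendsto_of_tendsto_of_le_of_le (hr.comp hg1) (hr.comp hg)
      (fun k => ?_) (fun k => ?_)
    · have he : (T ^ (g k + 1)) z = A.opW q (A.opW p ((T ^ g k) z)) := by
        rw [pow_succ', ContinuousLinearMap.mul_apply, hT, opW_append,
          ContinuousLinearMap.comp_apply]
      show ‖(T ^ (g k + 1)) z‖ ≤ _
      rw [he]
      exact A.opW_norm_le hv q _
    · exact A.opW_norm_le hv p _
  have hlim2 : Filter.Tendsto (fun k => ‖A.opW p ((T ^ g k) z)‖) Filter.atTop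
      (nhds ‖A.opW p (S z)‖) :=
    (continuous_norm.tendsto _).comp (((A.opW p).continuous.tendsto _).comp hptz)
  have hfixn : ‖A.opW p (S z)‖ = ‖S z‖ := by
    rw [hSz]; exact tendsto_nhds_unique hlim2 hsq
  exact A.opW_fix hv p (S z) hfixn

lemma limit_idem (hv : A.Valid) (t : List σ) (g : ℕ → ℕ)
    (hg : Filter.Tendsto g Filter.atTop Filter.atTop)
    {S : EuclideanSpace ℂ (Fin A.m × Fin A.m) →L[ℂ] EuclideanSpace ℂ (Fin A.m × Fin A.m)}
    (hS : Filter.Tendsto (fun k => A.opW t ^ g k) Filter.atTop (nhds S)) (z) :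
    S (S z) = S z := by
  have hfix : (A.opW t).comp S = S := by
    refine A.comp_limit_fix hv t [] g hg ?_
    rwa [List.append_nil]
  have hTn : ∀ n, (A.opW t ^ n) (S z) = S z := by
    intro n
    induction n with
    | zero => simp
    | succ n ih =>
        have hTz : A.opW t (S z) = S z := by
          rw [← ContinuousLinearMap.comp_apply, hfix]
        rw [pow_succ, ContinuousLinearMap.mul_apply, hTz, ih]
  have h1 : Filter.Tendsto (fun k => (A.opW t ^ g k) (S z)) Filter.atTop (nhds (S (S z))) := by
    have hcont : Continuous fun
        (B : EuclideanSpace ℂ (Fin A.m × Fin A.m) →L[ℂ] EuclideanSpace ℂ (Fin A.m × Fin A.m)) =>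
        B (S z) := (ContinuousLinearMap.apply ℂ _ (S z)).continuous
    exact (hcont.tendsto S).comp hS
  have h2 : (fun k => (A.opW t ^ g k) (S z)) = fun _ => S z := funext fun k => hTn _
  rw [h2] at h1
  exact (tendsto_nhds_unique h1 tendsto_const_nhds)

end MOnQFA

end LimitTools

noncomputable section KeyTools

lemma mul_pow_shift {R : Type*} [Monoid R] (a b : R) (n : ℕ) :
    (a * b) ^ n * a = a * (b * a) ^ n :=
  (SemiconjBy.pow_right ((mul_assoc a b a).symm) n).symm

namespace MOnQFA
variable {σ : Type} (A : MOnQFA σ)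

lemma opW_mul (u v : List σ) : A.opW (u ++ v) = A.opW v * A.opW u :=
  A.opW_append u v

set_option maxHeartbeats 1000000 in
lemma key_R (hv : A.Valid) (x p q : List σ) (ε : ℝ) (hε : 0 < ε) :
    ∃ n : ℕ, ‖A.opW (x ++ (wpow (p ++ q) n ++ p)) - A.opW (x ++ wpow (p ++ q) n)‖ < ε := by
  obtain ⟨g, S, hg, hconv, hS⟩ := A.exists_limit hv (p ++ q)
  have hgt : Filter.Tendsto g Filter.atTop Filter.atTop := hg.tendsto_atTop
  have hP : A.opW p * S = S := A.comp_limit_fix hv p q g hgt hconv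
  have h1 : ∀ n : ℕ, A.opW (x ++ wpow (p ++ q) n) = A.opW (p ++ q) ^ n * A.opW x :=
    fun n => by rw [opW_mul, opW_wpow]
  have h2 : ∀ n : ℕ, A.opW (x ++ (wpow (p ++ q) n ++ p))
      = A.opW p * A.opW (p ++ q) ^ n * A.opW x := fun n => by
    rw [opW_mul, opW_mul, opW_wpow, mul_assoc]
  have hc1 : Filter.Tendsto (fun k => A.opW (p ++ q) ^ g k * A.opW x) Filter.atTop
      (nhds (S * A.opW x)) := hconv.mul tendsto_const_nhds
  have hc2 : Filter.Tendsto (fun k => A.opW p * A.opW (p ++ q) ^ g k * A.opW x) Filter.atTop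
      (nhds (A.opW p * S * A.opW x)) :=
    ((tendsto_const_nhds.mul hconv).mul tendsto_const_nhds)
  have hdiff : Filter.Tendsto (fun k => A.opW (x ++ (wpow (p ++ q) (g k) ++ p))
      - A.opW (x ++ wpow (p ++ q) (g k))) Filter.atTop (nhds 0) := by
    have := hc2.sub hc1
    rw [hP, sub_self] at this
    simpa only [h1, h2] using this
  have := (NormedAddCommGroup.tendsto_nhds_zero.mp hdiff) ε hε
  obtain ⟨k, hk⟩ := this.exists
  exact ⟨g k, hk⟩

set_option maxHeartbeats 1000000 in
lemma key_L (hv : A.Valid) (x y : List σ) (ε : ℝ) (hε : 0 < ε) :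
    ∃ n : ℕ, ‖A.opW (x ++ wpow (y ++ x) n) - A.opW (y ++ wpow (x ++ y) n)‖ < ε := by
  obtain ⟨g, S₁, S₂, hg, hconv₁, hconv₂, hS₁, hS₂⟩ := A.exists_limit_pair hv (x ++ y) (y ++ x)
  have hgt : Filter.Tendsto g Filter.atTop Filter.atTop := hg.tendsto_atTop
  set Aop := A.opW x with hAop
  set Bop := A.opW y with hBop
  have hT1 : A.opW (x ++ y) = Bop * Aop := A.opW_mul x y
  have hT2 : A.opW (y ++ x) = Aop * Bop := A.opW_mul y x
  -- fixing relations
  have hA1 : Aop * S₁ = S₁ := A.comp_limit_fix hv x y g hgt hconv₁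
  have hB2 : Bop * S₂ = S₂ := A.comp_limit_fix hv y x g hgt hconv₂
  have hT1S1 : A.opW (x ++ y) * S₁ = S₁ := by
    refine A.comp_limit_fix hv (x ++ y) [] g hgt ?_
    rwa [List.append_nil]
  have hT2S2 : A.opW (y ++ x) * S₂ = S₂ := by
    refine A.comp_limit_fix hv (y ++ x) [] g hgt ?_
    rwa [List.append_nil]
  have hB1 : Bop * S₁ = S₁ := by
    conv_lhs => rw [← hA1]
    rw [← mul_assoc, ← hT1, hT1S1]
  have hA2 : Aop * S₂ = S₂ := by
    conv_lhs => rw [← hB2]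
    rw [← mul_assoc, ← hT2, hT2S2]
  -- exchange relations
  have hshift1 : ∀ n : ℕ, A.opW (y ++ x) ^ n * Aop = Aop * A.opW (x ++ y) ^ n := fun n => by
    rw [hT1, hT2, mul_pow_shift]
  have hshift2 : ∀ n : ℕ, A.opW (x ++ y) ^ n * Bop = Bop * A.opW (y ++ x) ^ n := fun n => by
    rw [hT1, hT2, mul_pow_shift]
  have hS2A : S₂ * Aop = S₁ := by
    have hl : Filter.Tendsto (fun k => A.opW (y ++ x) ^ g k * Aop) Filter.atTop
        (nhds (S₂ * Aop)) := hconv₂.mul tendsto_const_nhds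
    have hr : Filter.Tendsto (fun k => A.opW (y ++ x) ^ g k * Aop) Filter.atTop
        (nhds (Aop * S₁)) := by
      have := (tendsto_const_nhds (x := Aop)).mul hconv₁
      simpa only [← hshift1] using this
    rw [← hA1]
    exact tendsto_nhds_unique hl hr
  have hS1B : S₁ * Bop = S₂ := by
    have hl : Filter.Tendsto (fun k => A.opW (x ++ y) ^ g k * Bop) Filter.atTop
        (nhds (S₁ * Bop)) := hconv₁.mul tendsto_const_nhds
    have hr : Filter.Tendsto (fun k => A.opW (x ++ y) ^ g k * Bop) Filter.atTop
        (nhds (Bop * S₂)) := by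
      have := (tendsto_const_nhds (x := Bop)).mul hconv₂
      simpa only [← hshift2] using this
    rw [← hB2]
    exact tendsto_nhds_unique hl hr
  -- idempotence
  have hidem1 : ∀ z, S₁ (S₁ z) = S₁ z := A.limit_idem hv (x ++ y) g hgt hconv₁
  have hidem2 : ∀ z, S₂ (S₂ z) = S₂ z := A.limit_idem hv (y ++ x) g hgt hconv₂
  have hidem1' : S₁ * S₁ = S₁ := ContinuousLinearMap.ext fun z => hidem1 z
  have hidem2' : S₂ * S₂ = S₂ := ContinuousLinearMap.ext fun z => hidem2 z
  -- mutual absorption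
  have h12 : S₁ * S₂ = S₂ := by rw [← hS1B, ← mul_assoc, hidem1', hS1B]
  have h21 : S₂ * S₁ = S₁ := by rw [← hS2A, ← mul_assoc, hidem2', hS2A]
  -- contraction bounds
  have hc1 : ∀ u, ‖S₁ u‖ ≤ ‖u‖ := fun u => by
    calc ‖S₁ u‖ ≤ ‖S₁‖ * ‖u‖ := S₁.le_opNorm u
      _ ≤ 1 * ‖u‖ := by gcongr
      _ = ‖u‖ := one_mul _
  have hc2 : ∀ u, ‖S₂ u‖ ≤ ‖u‖ := fun u => by
    calc ‖S₂ u‖ ≤ ‖S₂‖ * ‖u‖ := S₂.le_opNorm u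
      _ ≤ 1 * ‖u‖ := by gcongr
      _ = ‖u‖ := one_mul _
  have h12' : ∀ u, S₁ (S₂ u) = S₂ u := fun u => by
    rw [← ContinuousLinearMap.mul_apply, h12]
  have h21' : ∀ u, S₂ (S₁ u) = S₁ u := fun u => by
    rw [← ContinuousLinearMap.mul_apply, h21]
  have hSeq : S₁ = S₂ := idem_pair_eq S₁ S₂ hidem1 hidem2 hc1 hc2 h12' h21'
  -- sequences and conclusion
  have h1 : ∀ n : ℕ, A.opW (x ++ wpow (y ++ x) n) = A.opW (y ++ x) ^ n * Aop :=
    fun n => by rw [opW_mul, opW_wpow, hAop]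
  have h2 : ∀ n : ℕ, A.opW (y ++ wpow (x ++ y) n) = A.opW (x ++ y) ^ n * Bop :=
    fun n => by rw [opW_mul, opW_wpow, hBop]
  have hcA : Filter.Tendsto (fun k => A.opW (y ++ x) ^ g k * Aop) Filter.atTop
      (nhds (S₂ * Aop)) := hconv₂.mul tendsto_const_nhds
  have hcB : Filter.Tendsto (fun k => A.opW (x ++ y) ^ g k * Bop) Filter.atTop
      (nhds (S₁ * Bop)) := hconv₁.mul tendsto_const_nhds
  have hdiff : Filter.Tendsto (fun k => A.opW (x ++ wpow (y ++ x) (g k))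
      - A.opW (y ++ wpow (x ++ y) (g k))) Filter.atTop (nhds 0) := by
    have := hcA.sub hcB
    rw [hS2A, hS1B, ← hSeq, sub_self] at this
    simpa only [h1, h2] using this
  obtain ⟨k, hk⟩ := ((NormedAddCommGroup.tendsto_nhds_zero.mp hdiff) ε hε).exists
  exact ⟨g k, hk⟩

end MOnQFA

end KeyTools

noncomputable section LangTools

/-- The list-level syntactic relation of a language. -/
def synR {σ : Type} (L : Set (List σ)) (x y : List σ) : Prop :=
  ∀ a b : List σ, (a ++ x ++ b ∈ L ↔ a ++ y ++ b ∈ L)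

lemma synR_refl {σ : Type} (L : Set (List σ)) (x : List σ) : synR L x x :=
  fun _ _ => Iff.rfl

lemma synR_symm {σ : Type} {L : Set (List σ)} {x y : List σ} (h : synR L x y) : synR L y x :=
  fun a b => (h a b).symm

lemma synR_trans {σ : Type} {L : Set (List σ)} {x y z : List σ} (h1 : synR L x y)
    (h2 : synR L y z) : synR L x z :=
  fun a b => (h1 a b).trans (h2 a b)

lemma synR_appendl {σ : Type} {L : Set (List σ)} {x y : List σ} (h : synR L x y) (w : List σ) :
    synR L (w ++ x) (w ++ y) := fun a b => by
  have := h (a ++ w) b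
  simpa [List.append_assoc] using this

lemma synR_appendr {σ : Type} {L : Set (List σ)} {x y : List σ} (h : synR L x y) (w : List σ) :
    synR L (x ++ w) (y ++ w) := fun a b => by
  have := h a (w ++ b)
  simpa [List.append_assoc] using this

lemma mem_mul_iff {σ : Type} (L : Set (List σ)) (a b : FreeMonoid σ) (x : List σ) :
    a * FreeMonoid.ofList x * b ∈ L ↔ a.toList ++ x ++ b.toList ∈ L := by
  have e : a * FreeMonoid.ofList x * b = FreeMonoid.ofList (a.toList ++ x ++ b.toList) := by
    simp [FreeMonoid.ofList_append, mul_assoc]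
  rw [e]
  exact Iff.rfl

lemma synCon_iff {σ : Type} (L : Set (List σ)) (x y : List σ) :
    (synCon L) (FreeMonoid.ofList x) (FreeMonoid.ofList y) ↔ synR L x y := by
  constructor
  · intro h a b
    have := h (FreeMonoid.ofList a) (FreeMonoid.ofList b)
    replace this := (mem_mul_iff L _ _ x).symm.trans (this.trans (mem_mul_iff L _ _ y))
    simpa using this
  · intro h a b
    refine (mem_mul_iff L a b x).trans (Iff.trans ?_ (mem_mul_iff L a b y).symm)
    exact h _ _

lemma synR_wpow {σ : Type} {L : Set (List σ)} {x t : List σ} (h : synR L (x ++ t) x) :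
    ∀ n : ℕ, synR L (x ++ MOnQFA.wpow t n) x := by
  intro n
  induction n with
  | zero => rw [MOnQFA.wpow, List.append_nil]; exact synR_refl L x
  | succ n ih =>
      have h1 : synR L ((x ++ t) ++ MOnQFA.wpow t n) (x ++ MOnQFA.wpow t n) :=
        synR_appendr h _
      rw [List.append_assoc] at h1
      rw [MOnQFA.wpow]
      exact synR_trans h1 ih

namespace MOnQFA
variable {σ : Type} (A : MOnQFA σ)

lemma prob_diff_le (hv : A.Valid) (x y a b : List σ) :
    |A.prob (a ++ x ++ b) - A.prob (a ++ y ++ b)| ≤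
      ‖A.fV‖ * ‖A.vinit‖ * ‖A.opW x - A.opW y‖ := by
  rw [prob_eq, prob_eq]
  have e1 : ∀ w : List σ, A.opW (a ++ w ++ b) A.vinit
      = A.opW b (A.opW w (A.opW a A.vinit)) := fun w => by
    rw [opW_append, opW_append, ContinuousLinearMap.comp_apply, ContinuousLinearMap.comp_apply]
  rw [e1, e1]
  set Za := A.opW a A.vinit with hZa
  set u := A.opW b (A.opW x Za) - A.opW b (A.opW y Za) with hu
  have hre : (A.fV (A.opW b (A.opW x Za))).re - (A.fV (A.opW b (A.opW y Za))).re
      = (A.fV u).re := by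
    rw [hu, map_sub, Complex.sub_re]
  rw [hre]
  have h1 : |(A.fV u).re| ≤ ‖A.fV u‖ := by
    exact Complex.abs_re_le_norm _
  have h2 : ‖A.fV u‖ ≤ ‖A.fV‖ * ‖u‖ := A.fV.le_opNorm u
  have h3 : ‖u‖ ≤ ‖A.opW x Za - A.opW y Za‖ := by
    rw [hu, ← map_sub]
    exact A.opW_norm_le hv b _
  have h4 : ‖A.opW x Za - A.opW y Za‖ ≤ ‖A.opW x - A.opW y‖ * ‖Za‖ := by
    rw [← ContinuousLinearMap.sub_apply]
    exact (A.opW x - A.opW y).le_opNorm Za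
  have h5 : ‖Za‖ ≤ ‖A.vinit‖ := A.opW_norm_le hv a _
  have hfv : (0:ℝ) ≤ ‖A.fV‖ := norm_nonneg _
  have hd : (0:ℝ) ≤ ‖A.opW x - A.opW y‖ := norm_nonneg _
  calc |(A.fV u).re| ≤ ‖A.fV‖ * ‖u‖ := h1.trans h2
    _ ≤ ‖A.fV‖ * (‖A.opW x - A.opW y‖ * ‖A.vinit‖) := by
        refine mul_le_mul_of_nonneg_left ?_ hfv
        refine h3.trans (h4.trans ?_)
        exact mul_le_mul_of_nonneg_left h5 hd
    _ = ‖A.fV‖ * ‖A.vinit‖ * ‖A.opW x - A.opW y‖ := by ring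

end MOnQFA

end LangTools

lemma synCon_iff' {σ : Type} (L : Set (List σ)) (u v : FreeMonoid σ) :
    (synCon L) u v ↔ synR L u.toList v.toList := by
  have := synCon_iff L u.toList v.toList
  simpa [FreeMonoid.ofList_toList] using this
theorem synMonoid_rTrivial_blockGroup_of_lmo
    (σ : Type) [Fintype σ] [Nonempty σ] (L : Set (List σ)) (hL : L ∈ LMO σ) :
    Finite (SynMonoid (σ := σ) L) ∧ IsRTrivial (SynMonoid (σ := σ) L) ∧
      IsBlockGroup (SynMonoid (σ := σ) L) := by
  obtain ⟨A, hv, lam, δ, hlam, hδ, hiso, hLdef⟩ := hL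
  set ε : ℝ := 2 * δ / (‖A.fV‖ * ‖A.vinit‖ + 1) with hεdef
  have hK0 : (0:ℝ) ≤ ‖A.fV‖ * ‖A.vinit‖ := mul_nonneg (norm_nonneg _) (norm_nonneg _)
  have hεpos : 0 < ε := by rw [hεdef]; positivity
  -- side determination
  have hside : ∀ x y : List σ, ‖A.opW x - A.opW y‖ < ε → synR L x y := by
    intro x y hxy a b
    have hd := A.prob_diff_le hv x y a b
    have hKd : ‖A.fV‖ * ‖A.vinit‖ * ‖A.opW x - A.opW y‖ < 2 * δ := by
      have h1 : ‖A.fV‖ * ‖A.vinit‖ * ‖A.opW x - A.opW y‖ ≤ (‖A.fV‖ * ‖A.vinit‖) * ε :=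
        mul_le_mul_of_nonneg_left hxy.le hK0
      have hpos : (0:ℝ) < ‖A.fV‖ * ‖A.vinit‖ + 1 := by linarith
      have h2 : (‖A.fV‖ * ‖A.vinit‖) * ε < 2 * δ := by
        rw [hεdef, mul_div_assoc', div_lt_iff₀ hpos]
        nlinarith
      linarith
    have habs : |A.prob (a ++ x ++ b) - A.prob (a ++ y ++ b)| < 2 * δ := lt_of_le_of_lt hd hKd
    have h1 := hiso (a ++ x ++ b)
    have h2 := hiso (a ++ y ++ b)
    rw [hLdef]
    simp only [Set.mem_setOf_eq]
    rcases le_abs.mp h1 with hc1 | hc1 <;> rcases le_abs.mp h2 with hc2 | hc2 <;>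
      rcases abs_lt.mp habs with ⟨hl, hr⟩ <;> constructor <;> intro h <;> linarith
  -- Finiteness
  haveI := FiniteDimensional.proper ℂ
    (EuclideanSpace ℂ (Fin A.m × Fin A.m) →L[ℂ] EuclideanSpace ℂ (Fin A.m × Fin A.m))
  have hcpt : IsCompact (Metric.closedBall
      (0 : EuclideanSpace ℂ (Fin A.m × Fin A.m) →L[ℂ] EuclideanSpace ℂ (Fin A.m × Fin A.m)) 1) :=
    isCompact_closedBall _ _
  obtain ⟨t, htfin, hcov⟩ := Metric.totallyBounded_iff.mp hcpt.totallyBounded (ε/2) (by positivity)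
  have hball : ∀ q : SynMonoid (σ := σ) L, ∃ c ∈ t,
      A.opW (FreeMonoid.toList (Quotient.out q)) ∈ Metric.ball c (ε/2) := by
    intro q
    have hmem : A.opW (FreeMonoid.toList (Quotient.out q)) ∈ Metric.closedBall
        (0 : EuclideanSpace ℂ (Fin A.m × Fin A.m) →L[ℂ] EuclideanSpace ℂ (Fin A.m × Fin A.m)) 1 := by
      rw [Metric.mem_closedBall, dist_zero_right]
      exact A.opW_opNorm_le hv _
    have := hcov hmem
    simpa using this
  choose ctr hctr hctrball using hball
  have houtq : ∀ q : SynMonoid (σ := σ) L,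
      ((Quotient.out q : FreeMonoid σ) : (synCon L).Quotient) = q := fun q => Quotient.out_eq q
  have hfin : Finite (SynMonoid (σ := σ) L) := by
    haveI := htfin.to_subtype
    refine Finite.of_injective (fun q => (⟨ctr q, hctr q⟩ : t)) ?_
    intro q q' h
    simp only [Subtype.mk_eq_mk] at h
    have h1 := hctrball q
    have h2 := hctrball q'
    rw [h] at h1
    rw [Metric.mem_ball] at h1 h2
    have hlt : ‖A.opW (FreeMonoid.toList (Quotient.out q))
        - A.opW (FreeMonoid.toList (Quotient.out q'))‖ < ε := by
      rw [← dist_eq_norm]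
      calc dist (A.opW (FreeMonoid.toList (Quotient.out q)))
            (A.opW (FreeMonoid.toList (Quotient.out q')))
          ≤ dist (A.opW (FreeMonoid.toList (Quotient.out q))) (ctr q')
            + dist (A.opW (FreeMonoid.toList (Quotient.out q'))) (ctr q') := dist_triangle_right _ _ _
        _ < ε/2 + ε/2 := add_lt_add h1 h2
        _ = ε := by ring
    have hrel : (synCon L) (Quotient.out q) (Quotient.out q') :=
      (synCon_iff' L _ _).mpr (hside _ _ hlt)
    have := ((synCon L).eq).mpr hrel
    rw [houtq q, houtq q'] at this
    exact this
  -- R-triviality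
  have hRtriv : IsRTrivial (SynMonoid (σ := σ) L) := by
    intro a b hab
    have ha : a ∈ (Set.range fun x => a * x) := ⟨1, mul_one a⟩
    rw [hab] at ha
    obtain ⟨u, hu'⟩ := ha
    have hu : b * u = a := hu'
    have hb : b ∈ (Set.range fun x => b * x) := ⟨1, mul_one b⟩
    rw [← hab] at hb
    obtain ⟨v, hvv'⟩ := hb
    have hvv : a * v = b := hvv'
    obtain ⟨xw, hxw⟩ : ∃ w : FreeMonoid σ, (w : (synCon L).Quotient) = a := Quotient.exists_rep a
    obtain ⟨pw, hpw⟩ : ∃ w : FreeMonoid σ, (w : (synCon L).Quotient) = v := Quotient.exists_rep v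
    obtain ⟨qw, hqw⟩ : ∃ w : FreeMonoid σ, (w : (synCon L).Quotient) = u := Quotient.exists_rep u
    have key : a * (v * u) = a := by rw [← mul_assoc, hvv, hu]
    have hrel : (synCon L) (xw * (pw * qw)) xw := by
      refine ((synCon L).eq).mp ?_
      rw [Con.coe_mul, Con.coe_mul, hxw, hpw, hqw]; exact key
    have hrelL : synR L (xw.toList ++ (pw.toList ++ qw.toList)) xw.toList := by
      have := (synCon_iff' L _ _).mp hrel
      simpa [FreeMonoid.toList_mul] using this
    -- apply the key R lemma
    have hrelT : synR L (xw.toList ++ (pw.toList ++ qw.toList)) xw.toList := hrelL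
    obtain ⟨n, hn⟩ := A.key_R hv xw.toList pw.toList qw.toList ε hεpos
    have hs : synR L (xw.toList ++ (MOnQFA.wpow (pw.toList ++ qw.toList) n ++ pw.toList))
        (xw.toList ++ MOnQFA.wpow (pw.toList ++ qw.toList) n) := hside _ _ hn
    have hpow : ∀ m : ℕ, synR L (xw.toList ++ MOnQFA.wpow (pw.toList ++ qw.toList) m) xw.toList :=
      synR_wpow hrelT
    have hchain : synR L (xw.toList ++ pw.toList) xw.toList := by
      have h1 : synR L ((xw.toList ++ MOnQFA.wpow (pw.toList ++ qw.toList) n) ++ pw.toList)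
          (xw.toList ++ pw.toList) := synR_appendr (hpow n) pw.toList
      rw [List.append_assoc] at h1
      exact synR_trans (synR_symm h1) (synR_trans hs (hpow n))
    -- conclude a * v = a hence b = a
    have hfin2 : (synCon L) (xw * pw) xw := by
      refine (synCon_iff' L _ _).mpr ?_
      simpa [FreeMonoid.toList_mul] using hchain
    have := ((synCon L).eq).mpr hfin2
    rw [Con.coe_mul, hxw, hpw] at this
    rw [← hvv]; exact this.symm
  -- Block group
  refine ⟨hfin, hRtriv, ?_⟩
  intro e f he hf hd
  rcases hd with hR | hLc
  · exact hRtriv e f hR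
  · have he1 : e ∈ (Set.range fun x => x * e) := ⟨1, one_mul e⟩
    rw [hLc] at he1
    obtain ⟨u, hu'⟩ := he1
    have hu : u * f = e := hu'
    have hf1 : f ∈ (Set.range fun x => x * f) := ⟨1, one_mul f⟩
    rw [← hLc] at hf1
    obtain ⟨v, hvv'⟩ := hf1
    have hvv : v * e = f := hvv'
    have hef : e * f = e := by rw [← hu, mul_assoc, hf.eq]
    have hfe : f * e = f := by rw [← hvv, mul_assoc, he.eq]
    obtain ⟨xw, hxw⟩ : ∃ w : FreeMonoid σ, (w : (synCon L).Quotient) = e := Quotient.exists_rep e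
    obtain ⟨yw, hyw⟩ : ∃ w : FreeMonoid σ, (w : (synCon L).Quotient) = f := Quotient.exists_rep f
    have r1 : synR L (xw.toList ++ yw.toList) xw.toList := by
      have hrel : (synCon L) (xw * yw) xw := by
        refine ((synCon L).eq).mp ?_
        rw [Con.coe_mul, hxw, hyw]; exact hef
      simpa [FreeMonoid.toList_mul] using (synCon_iff' L _ _).mp hrel
    have r2 : synR L (yw.toList ++ xw.toList) yw.toList := by
      have hrel : (synCon L) (yw * xw) yw := by
        refine ((synCon L).eq).mp ?_
        rw [Con.coe_mul, hxw, hyw]; exact hfe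
      simpa [FreeMonoid.toList_mul] using (synCon_iff' L _ _).mp hrel
    have rxx : synR L (xw.toList ++ xw.toList) xw.toList := by
      have hrel : (synCon L) (xw * xw) xw := by
        refine ((synCon L).eq).mp ?_
        rw [Con.coe_mul, hxw]; exact he.eq
      simpa [FreeMonoid.toList_mul] using (synCon_iff' L _ _).mp hrel
    have ryy : synR L (yw.toList ++ yw.toList) yw.toList := by
      have hrel : (synCon L) (yw * yw) yw := by
        refine ((synCon L).eq).mp ?_
        rw [Con.coe_mul, hyw]; exact hf.eq
      simpa [FreeMonoid.toList_mul] using (synCon_iff' L _ _).mp hrel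
    -- absorption of the mixed word
    have hXt : synR L (xw.toList ++ (yw.toList ++ xw.toList)) xw.toList := by
      have h1 : synR L ((xw.toList ++ yw.toList) ++ xw.toList) (xw.toList ++ xw.toList) :=
        synR_appendr r1 xw.toList
      rw [List.append_assoc] at h1
      exact synR_trans h1 rxx
    have hYt : synR L (yw.toList ++ (xw.toList ++ yw.toList)) yw.toList := by
      have h1 : synR L ((yw.toList ++ xw.toList) ++ yw.toList) (yw.toList ++ yw.toList) :=
        synR_appendr r2 yw.toList
      rw [List.append_assoc] at h1
      exact synR_trans h1 ryy
    obtain ⟨n, hn⟩ := A.key_L hv xw.toList yw.toList ε hεpos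
    have hs : synR L (xw.toList ++ MOnQFA.wpow (yw.toList ++ xw.toList) n)
        (yw.toList ++ MOnQFA.wpow (xw.toList ++ yw.toList) n) := hside _ _ hn
    have hfinal : synR L xw.toList yw.toList :=
      synR_trans (synR_symm (synR_wpow hXt n)) (synR_trans hs (synR_wpow hYt n))
    have hrel : (synCon L) xw yw := (synCon_iff' L _ _).mpr (by simpa using hfinal)
    have := ((synCon L).eq).mpr hrel
    rw [hxw, hyw] at this
    exact this
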